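/- (Closed-form solution, rank-deficient case with μ > 0) Let λ ∈ ℝ^N with λ_n ≥ 0 for all n, let I₀ = {n : λ_n = 0}, let c ∈ ℝ^N with c_n ≥ 0 for all n, and let ε > 0 satisfy ∑_{n∈I₀} c_n² < ε² < ∑_{n=1}^N c_n². Let k > 0 be the unique solution of ∑_{n=1}^N (c_n k / (2λ_n + k))² = ε², set μ = (∑_{n=1}^N 2λ_n c_n² / (2λ_n + k)²)⁻¹, and define u⋆ ∈ ℝ^N by u⋆_n = μ c_n / (2λ_n + k). Then u⋆ is the unique global minimizer of ∑_{n=1}^N λ_n u_n² over {u ∈ ℝ^N : ∑_{n=1}^N c_n u_n ≥ ε‖u‖₂ + 1}, and u⋆_n ≥ 0 for all n. -/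

import Mathlib

open Classical in
/-- closed-form solution, rank-deficient case with μ > 0: with
`λ ≥ 0`, `I₀ = {n : λ_n = 0}`, `c ≥ 0`, `0 < ε`,
`∑_{I₀} c_n² < ε² < ∑ c_n²`, `k > 0` solving the secular equation,
`μ = (∑ 2λ_n c_n²/(2λ_n+k)²)⁻¹` and `u⋆_n = μ c_n/(2λ_n + k)`, the vector `u⋆`
is the unique global minimizer of `∑ λ_n u_n²` over
`{u : ∑ c_n u_n ≥ ε‖u‖₂ + 1}`, and `u⋆ ≥ 0`. -/
theorem rab_closed_form_rank_deficient (N : ℕ)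
    (lam c : Fin N → ℝ) (hlam : ∀ n, 0 ≤ lam n) (hc : ∀ n, 0 ≤ c n)
    (ε : ℝ) (hε : 0 < ε)
    (hlow : (∑ n ∈ Finset.univ.filter (fun n => lam n = 0), (c n) ^ 2) < ε ^ 2)
    (hhigh : ε ^ 2 < ∑ n, (c n) ^ 2)
    (k : ℝ) (hk : 0 < k)
    (hsec : ∑ n, (c n * k / (2 * lam n + k)) ^ 2 = ε ^ 2)
    (μ : ℝ) (hμ : μ = (∑ n, 2 * lam n * (c n) ^ 2 / (2 * lam n + k) ^ 2)⁻¹)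
    (ustar : Fin N → ℝ) (hustar : ∀ n, ustar n = μ * c n / (2 * lam n + k)) :
    (ε * Real.sqrt (∑ n, (ustar n) ^ 2) + 1 ≤ ∑ n, c n * ustar n) ∧
    (∀ u : Fin N → ℝ, ε * Real.sqrt (∑ n, (u n) ^ 2) + 1 ≤ ∑ n, c n * u n →
      ∑ n, lam n * (ustar n) ^ 2 ≤ ∑ n, lam n * (u n) ^ 2) ∧
    (∀ u : Fin N → ℝ, ε * Real.sqrt (∑ n, (u n) ^ 2) + 1 ≤ ∑ n, c n * u n →
      (∀ v : Fin N → ℝ, ε * Real.sqrt (∑ n, (v n) ^ 2) + 1 ≤ ∑ n, c n * v n →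
        ∑ n, lam n * (u n) ^ 2 ≤ ∑ n, lam n * (v n) ^ 2) → u = ustar) ∧
    (∀ n, 0 ≤ ustar n) := by
  have hden : ∀ n, 0 < 2 * lam n + k := fun n => by have := hlam n; linarith
  have hdenne : ∀ n, 2 * lam n + k ≠ 0 := fun n => (hden n).ne'
  -- existence of n₀ with lam n₀ > 0 and c n₀ > 0
  have hn0 : ∃ n₀, 0 < lam n₀ ∧ 0 < c n₀ := by
    by_contra h
    push_neg at h
    have hcz : ∀ n, lam n ≠ 0 → c n = 0 := by
      intro n hn
      have hln : 0 < lam n := lt_of_le_of_ne (hlam n) (Ne.symm hn)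
      exact le_antisymm (h n hln) (hc n)
    have hsum_eq : ∑ n, (c n * k / (2 * lam n + k)) ^ 2
        = ∑ n ∈ Finset.univ.filter (fun n => lam n = 0), (c n) ^ 2 := by
      rw [← Finset.sum_filter_add_sum_filter_not Finset.univ (fun n => lam n = 0)
        (fun n => (c n * k / (2 * lam n + k)) ^ 2)]
      have h1 : ∑ n ∈ Finset.univ.filter (fun n => lam n = 0),
          (c n * k / (2 * lam n + k)) ^ 2
          = ∑ n ∈ Finset.univ.filter (fun n => lam n = 0), (c n) ^ 2 := by
        apply Finset.sum_congr rfl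
        intro n hn
        have hln : lam n = 0 := (Finset.mem_filter.mp hn).2
        rw [hln]
        field_simp
        ring
      have h2 : ∑ n ∈ Finset.univ.filter (fun n => ¬ lam n = 0),
          (c n * k / (2 * lam n + k)) ^ 2 = 0 := by
        apply Finset.sum_eq_zero
        intro n hn
        have hln : ¬ lam n = 0 := (Finset.mem_filter.mp hn).2
        rw [hcz n hln]
        simp
      rw [h1, h2, add_zero]
    rw [hsum_eq] at hsec
    linarith
  obtain ⟨n₀, hl0, hc0⟩ := hn0
  have hApos : 0 < ∑ n, 2 * lam n * (c n) ^ 2 / (2 * lam n + k) ^ 2 := by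
    apply Finset.sum_pos'
    · intro n _
      have := hlam n; have := hc n; have := hden n
      positivity
    · exact ⟨n₀, Finset.mem_univ _, by have := hden n₀; positivity⟩
  have hμpos : 0 < μ := hμ ▸ inv_pos.mpr hApos
  have hμA : μ * (∑ n, 2 * lam n * (c n) ^ 2 / (2 * lam n + k) ^ 2) = 1 := by
    rw [hμ]; exact inv_mul_cancel₀ hApos.ne'
  have hS2 : ∑ n, (c n / (2 * lam n + k)) ^ 2 = ε ^ 2 / k ^ 2 := by
    have h1 : ∑ n, (c n * k / (2 * lam n + k)) ^ 2
        = k ^ 2 * ∑ n, (c n / (2 * lam n + k)) ^ 2 := by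
      rw [Finset.mul_sum]
      apply Finset.sum_congr rfl
      intro n _; field_simp
    rw [h1] at hsec
    field_simp at hsec ⊢
    linarith
  have hkey : ∀ n, 2 * lam n * ustar n + k * ustar n = μ * c n := by
    intro n
    rw [hustar n]
    field_simp [hdenne n]
  have hcu : ∑ n, c n * ustar n = 1 + μ * ε ^ 2 / k := by
    have he : ∀ n, c n * ustar n
        = μ * (2 * lam n * (c n) ^ 2 / (2 * lam n + k) ^ 2)
          + (μ * k) * (c n / (2 * lam n + k)) ^ 2 := by
      intro n
      rw [hustar n]
      field_simp [hdenne n]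
    rw [Finset.sum_congr rfl (fun n _ => he n), Finset.sum_add_distrib,
      ← Finset.mul_sum, ← Finset.mul_sum, hμA, hS2]
    field_simp
  have hus2 : ∑ n, (ustar n) ^ 2 = μ ^ 2 * ε ^ 2 / k ^ 2 := by
    have he : ∀ n, (ustar n) ^ 2 = μ ^ 2 * (c n / (2 * lam n + k)) ^ 2 := by
      intro n; rw [hustar n]; field_simp [hdenne n]
    rw [Finset.sum_congr rfl (fun n _ => he n), ← Finset.mul_sum, hS2]
    ring
  have hsqrt : Real.sqrt (∑ n, (ustar n) ^ 2) = μ * ε / k := by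
    rw [hus2, show μ ^ 2 * ε ^ 2 / k ^ 2 = (μ * ε / k) ^ 2 by ring]
    exact Real.sqrt_sq (by positivity)
  have hobj : ∑ n, lam n * (ustar n) ^ 2 = μ / 2 := by
    have he : ∀ n, lam n * (ustar n) ^ 2
        = (μ * (c n * ustar n) - k * (ustar n) ^ 2) / 2 := by
      intro n
      linear_combination (ustar n / 2) * (hkey n)
    rw [Finset.sum_congr rfl (fun n _ => he n), ← Finset.sum_div,
      Finset.sum_sub_distrib, ← Finset.mul_sum, ← Finset.mul_sum, hcu, hus2]
    field_simp
    ring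
  -- decomposition
  have decomp : ∀ u : Fin N → ℝ, ∑ n, lam n * (u n) ^ 2
      = (∑ n, lam n * (u n - ustar n) ^ 2) + μ * (∑ n, c n * u n)
        - k * (∑ n, ustar n * u n) - μ / 2 := by
    intro u
    have he : ∀ n, lam n * (u n) ^ 2
        = lam n * (u n - ustar n) ^ 2 + μ * (c n * u n) - k * (ustar n * u n)
          - lam n * (ustar n) ^ 2 := by
      intro n
      linear_combination (u n) * (hkey n)
    calc ∑ n, lam n * (u n) ^ 2
        = ∑ n, (lam n * (u n - ustar n) ^ 2 + μ * (c n * u n) - k * (ustar n * u n)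
            - lam n * (ustar n) ^ 2) := Finset.sum_congr rfl (fun n _ => he n)
      _ = (∑ n, lam n * (u n - ustar n) ^ 2) + (∑ n, μ * (c n * u n))
            - (∑ n, k * (ustar n * u n)) - ∑ n, lam n * (ustar n) ^ 2 := by
          rw [Finset.sum_sub_distrib, Finset.sum_sub_distrib, Finset.sum_add_distrib]
      _ = _ := by rw [← Finset.mul_sum, ← Finset.mul_sum, hobj]
  -- Cauchy-Schwarz
  have CS : ∀ u : Fin N → ℝ,
      (∑ n, ustar n * u n) ≤ (μ * ε / k) * Real.sqrt (∑ n, (u n) ^ 2) := by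
    intro u
    have h1 := Finset.sum_mul_sq_le_sq_mul_sq Finset.univ ustar u
    calc (∑ n, ustar n * u n) ≤ Real.sqrt ((∑ n, ustar n * u n) ^ 2) := by
          rw [Real.sqrt_sq_eq_abs]; exact le_abs_self _
      _ ≤ Real.sqrt ((∑ n, (ustar n) ^ 2) * ∑ n, (u n) ^ 2) := Real.sqrt_le_sqrt h1
      _ = (μ * ε / k) * Real.sqrt (∑ n, (u n) ^ 2) := by
          rw [Real.sqrt_mul (by positivity), hsqrt]
  have part1 : ε * Real.sqrt (∑ n, (ustar n) ^ 2) + 1 ≤ ∑ n, c n * ustar n := by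
    rw [hsqrt, hcu]
    apply le_of_eq
    field_simp
    ring
  have part2 : ∀ u : Fin N → ℝ, ε * Real.sqrt (∑ n, (u n) ^ 2) + 1 ≤ ∑ n, c n * u n →
      ∑ n, lam n * (ustar n) ^ 2 ≤ ∑ n, lam n * (u n) ^ 2 := by
    intro u hu
    rw [hobj, decomp u]
    set Q := Real.sqrt (∑ n, (u n) ^ 2) with hQ
    have hT1 : 0 ≤ ∑ n, lam n * (u n - ustar n) ^ 2 :=
      Finset.sum_nonneg (fun n _ => mul_nonneg (hlam n) (sq_nonneg _))
    have hfeas : μ * (ε * Q + 1) ≤ μ * (∑ n, c n * u n) :=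
      mul_le_mul_of_nonneg_left hu hμpos.le
    have hcs : k * (∑ n, ustar n * u n) ≤ μ * ε * Q := by
      have := mul_le_mul_of_nonneg_left (CS u) hk.le
      calc k * (∑ n, ustar n * u n) ≤ k * ((μ * ε / k) * Q) := this
        _ = μ * ε * Q := by field_simp
    have hexp : μ * (ε * Q + 1) = μ * ε * Q + μ := by ring
    linarith
  refine ⟨part1, part2, ?_, fun n => by rw [hustar n]; have := hc n; have := hden n; positivity⟩
  intro u hu hmin
  have h1 : ∑ n, lam n * (u n) ^ 2 ≤ μ / 2 := by
    rw [← hobj]; exact hmin ustar part1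
  have h2 : μ / 2 ≤ ∑ n, lam n * (u n) ^ 2 := by rw [← hobj]; exact part2 u hu
  have heq : ∑ n, lam n * (u n) ^ 2 = μ / 2 := le_antisymm h1 h2
  set Q := Real.sqrt (∑ n, (u n) ^ 2) with hQdef
  have hQ0 : 0 ≤ Q := Real.sqrt_nonneg _
  have hQ2 : Q ^ 2 = ∑ n, (u n) ^ 2 :=
    Real.sq_sqrt (Finset.sum_nonneg fun n _ => sq_nonneg _)
  have hT1 : 0 ≤ ∑ n, lam n * (u n - ustar n) ^ 2 :=
    Finset.sum_nonneg (fun n _ => mul_nonneg (hlam n) (sq_nonneg _))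
  have hfeas : μ * (ε * Q + 1) ≤ μ * (∑ n, c n * u n) :=
    mul_le_mul_of_nonneg_left hu hμpos.le
  have hcs : k * (∑ n, ustar n * u n) ≤ μ * ε * Q := by
    have := mul_le_mul_of_nonneg_left (CS u) hk.le
    calc k * (∑ n, ustar n * u n) ≤ k * ((μ * ε / k) * Q) := this
      _ = μ * ε * Q := by field_simp
  have hdec := decomp u
  rw [heq] at hdec
  have hexp : μ * (ε * Q + 1) = μ * ε * Q + μ := by ring
  -- tightness
  have hT1z : ∑ n, lam n * (u n - ustar n) ^ 2 = 0 := by linarith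
  have hcseq : k * (∑ n, ustar n * u n) = μ * ε * Q := by linarith
  have hSu : ∑ n, ustar n * u n = (μ * ε / k) * Q := by
    rw [div_mul_eq_mul_div, eq_div_iff hk.ne']
    linarith
  -- from T1 = 0: u n₀ = ustar n₀
  have hall : ∀ n ∈ Finset.univ, lam n * (u n - ustar n) ^ 2 = 0 :=
    (Finset.sum_eq_zero_iff_of_nonneg
      (fun n _ => mul_nonneg (hlam n) (sq_nonneg _))).mp hT1z
  have hun0 : u n₀ = ustar n₀ := by
    have := hall n₀ (Finset.mem_univ _)
    have h := mul_eq_zero.mp this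
    rcases h with h | h
    · exact absurd h hl0.ne'
    · have := pow_eq_zero_iff (n := 2) (by norm_num) |>.mp h
      linarith
  have hust0 : 0 < ustar n₀ := by
    rw [hustar n₀]; have := hden n₀; positivity
  -- Cauchy-Schwarz equality: each Q * ustar n = (μ*ε/k) * u n
  set a := μ * ε / k with ha
  have ha0 : 0 < a := by positivity
  have hz : ∑ n, (Q * ustar n - a * u n) ^ 2 = 0 := by
    have he : ∀ n, (Q * ustar n - a * u n) ^ 2
        = Q ^ 2 * (ustar n) ^ 2 - (2 * Q * a) * (ustar n * u n) + a ^ 2 * (u n) ^ 2 := by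
      intro n; ring
    rw [Finset.sum_congr rfl (fun n _ => he n), Finset.sum_add_distrib,
      Finset.sum_sub_distrib, ← Finset.mul_sum, ← Finset.mul_sum, ← Finset.mul_sum,
      hus2, hSu, ← hQ2]
    have : μ ^ 2 * ε ^ 2 / k ^ 2 = a ^ 2 := by rw [ha]; ring
    rw [this]
    ring
  have hallz : ∀ n ∈ Finset.univ, (Q * ustar n - a * u n) ^ 2 = 0 :=
    (Finset.sum_eq_zero_iff_of_nonneg (fun n _ => sq_nonneg _)).mp hz
  have hprop : ∀ n, Q * ustar n = a * u n := by
    intro n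
    have := pow_eq_zero_iff (n := 2) (by norm_num) |>.mp (hallz n (Finset.mem_univ _))
    linarith
  have hQa : Q = a := by
    have h := hprop n₀
    rw [hun0] at h
    have : (Q - a) * ustar n₀ = 0 := by linarith [h]
    rcases mul_eq_zero.mp this with h' | h'
    · linarith
    · exact absurd h' hust0.ne'
  funext n
  have h := hprop n
  rw [hQa] at h
  have : a * (ustar n - u n) = 0 := by linarith
  rcases mul_eq_zero.mp this with h' | h'
  · exact absurd h' ha0.ne'
  · linarith
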